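/- Let G be a locally compact topological group with a left-invariant Haar measure μ, and let A₀ ⊆ G be a nonempty open subset with compact closure that generates G, i.e. G = ⋃_{n≥1} A₀ⁿ. Define the word length ℓ(g) = min{n ≥ 1 : g ∈ A₀ⁿ}. Let 1 ≤ p < ∞ and let f : G → ℂ be measurable with ∫_G |f|^{p+ε} dμ < ∞ for every ε > 0. Then for every δ with 0 < δ < 1, ∫_G |f(g)|^p·(1−δ)^{ℓ(g)} dμ(g) < ∞. -/

import Mathlib

open Pointwise MeasureTheory
open scoped ENNReal NNReal

/-- Young-type inequality in `ℝ≥0∞`. -/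
lemma stmt11_young (x y : ℝ≥0∞) (q q' : ℝ) (hq : 0 < q) (hq' : 0 < q')
    (h1 : q' / q + 1 = q') (h2 : q / q' + 1 = q) : x * y ≤ x ^ q + y ^ q' := by
  rcases eq_or_ne x 0 with rfl | hx0
  · simp
  rcases eq_or_ne y 0 with rfl | hy0
  · simp
  rcases eq_or_ne x ⊤ with rfl | hxt
  · rw [ENNReal.top_rpow_of_pos hq]; simp
  rcases eq_or_ne y ⊤ with rfl | hyt
  · rw [ENNReal.top_rpow_of_pos hq']; simp
  rcases le_or_gt x (y ^ (q' / q)) with hx | hx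
  · calc x * y ≤ y ^ (q' / q) * y ^ (1 : ℝ) := by rw [ENNReal.rpow_one]; gcongr
      _ = y ^ (q' / q + 1) := (ENNReal.rpow_add _ _ hy0 hyt).symm
      _ = y ^ q' := by rw [h1]
      _ ≤ _ := le_add_self
  · have hy : y ≤ x ^ (q / q') := by
      have := ENNReal.rpow_le_rpow hx.le (le_of_lt (by positivity : (0:ℝ) < q / q'))
      rw [← ENNReal.rpow_mul, div_mul_div_comm, mul_comm q' q, div_self (by positivity),
        ENNReal.rpow_one] at this
      exact this
    calc x * y ≤ x ^ (1:ℝ) * x ^ (q / q') := by rw [ENNReal.rpow_one]; gcongr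
      _ = x ^ (1 + q / q') := (ENNReal.rpow_add _ _ hx0 hxt).symm
      _ = x ^ q := by rw [add_comm, h2]
      _ ≤ _ := le_self_add

/-- On a compactly generated locally compact group, a measurable function lying
in `L^{p+ε}` for every `ε > 0` is `p`-tempered with respect to the word length
of an open relatively compact generating set. -/
theorem stmt11 {G : Type*} [Group G] [TopologicalSpace G] [IsTopologicalGroup G]
    [LocallyCompactSpace G] [MeasurableSpace G] [BorelSpace G]
    (μ : Measure G) [μ.IsHaarMeasure]
    (A₀ : Set G) (hne : A₀.Nonempty) (hopen : IsOpen A₀)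
    (hcomp : IsCompact (closure A₀))
    (hgen : ∀ g : G, ∃ n : ℕ, 1 ≤ n ∧ g ∈ A₀ ^ n)
    (p : ℝ) (hp : 1 ≤ p) (f : G → ℂ) (hmeas : Measurable f)
    (hf : ∀ ε : ℝ, 0 < ε → ∫⁻ g, (‖f g‖₊ : ℝ≥0∞) ^ (p + ε) ∂μ < ⊤) :
    ∀ δ : ℝ, 0 < δ → δ < 1 →
      ∫⁻ g, (‖f g‖₊ : ℝ≥0∞) ^ p *
          ENNReal.ofReal (1 - δ) ^ sInf {n : ℕ | 1 ≤ n ∧ g ∈ A₀ ^ n} ∂μ < ⊤ := by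
  intro δ hδ0 hδ1
  set K : Set G := closure A₀ with hK
  have hA₀K : A₀ ⊆ K := subset_closure
  have hKK : IsCompact (K * K) := hcomp.mul hcomp
  obtain ⟨a, ha⟩ := hne
  -- a finite covering of K * K by left translates of A₀
  obtain ⟨t, ht⟩ := hKK.elim_finite_subcover (fun g : G => g • A₀)
    (fun g => hopen.smul g) (by
      intro x _
      exact Set.mem_iUnion.2 ⟨x * a⁻¹, ⟨a, ha, by simp⟩⟩)
  set m : ℕ := t.card with hm
  -- exponential growth bound
  have hgrow : ∀ n : ℕ, μ (K * K ^ n) ≤ (m : ℝ≥0∞) ^ n * μ K := by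
    intro n
    induction n with
    | zero => simp
    | succ n ih =>
      have hsub : K * K ^ (n + 1) ⊆ ⋃ g ∈ t, g • (K * K ^ n) := by
        rw [pow_succ', ← mul_assoc]
        calc K * K * K ^ n ⊆ (⋃ g ∈ t, g • A₀) * K ^ n :=
              Set.mul_subset_mul_right ht
          _ ⊆ ⋃ g ∈ t, g • (K * K ^ n) := by
              rw [Set.iUnion₂_mul]
              refine Set.iUnion₂_mono fun g hg => ?_
              rw [smul_mul_assoc]
              exact Set.smul_set_mono (Set.mul_subset_mul_right hA₀K)
      calc μ (K * K ^ (n + 1)) ≤ ∑ g ∈ t, μ (g • (K * K ^ n)) :=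
            le_trans (measure_mono hsub) (measure_biUnion_finset_le t _)
        _ = ∑ _g ∈ t, μ (K * K ^ n) := by
            refine Finset.sum_congr rfl fun g _ => MeasureTheory.measure_smul μ g _
        _ = (m : ℝ≥0∞) * μ (K * K ^ n) := by
            rw [Finset.sum_const, nsmul_eq_mul]
        _ ≤ (m : ℝ≥0∞) * ((m : ℝ≥0∞) ^ n * μ K) := by gcongr
        _ = (m : ℝ≥0∞) ^ (n + 1) * μ K := by ring
  have hA : ∀ n : ℕ, μ (A₀ ^ (n + 1)) ≤ (m : ℝ≥0∞) ^ n * μ K := by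
    intro n
    refine le_trans (measure_mono ?_) (hgrow n)
    rw [pow_succ']
    exact Set.mul_subset_mul hA₀K (Set.pow_subset_pow_left hA₀K)
  -- choose the exponents
  set c : ℝ := 1 - δ with hc
  have hc0 : 0 < c := by linarith
  have hc1 : c < 1 := by linarith
  obtain ⟨N₀, hN₀⟩ := exists_pow_lt_of_lt_one
    (show (0:ℝ) < 1 / (m + 1) by positivity) hc1
  set N : ℕ := N₀ + 1 with hN
  have hNpos : (0:ℝ) < N := by positivity
  have hcN : c ^ (N + 1) * m < 1 := by
    have h1 : c ^ (N + 1) ≤ c ^ N₀ :=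
      pow_le_pow_of_le_one hc0.le hc1.le (by omega)
    have h2 : c ^ N₀ * m < 1 / (m + 1) * (m + 1) := by
      have hm1 : (0:ℝ) < (m:ℝ) + 1 := by positivity
      calc c ^ N₀ * m ≤ c ^ N₀ * ((m:ℝ) + 1) := by
            have : (0:ℝ) ≤ c ^ N₀ := by positivity
            nlinarith
        _ < 1 / (m + 1) * (m + 1) := by
            exact mul_lt_mul_of_pos_right hN₀ hm1
      -- done
    have h3 : (1:ℝ) / (m + 1) * (m + 1) = 1 := by
      field_simp
    nlinarith [mul_le_mul_of_nonneg_right h1 (by positivity : (0:ℝ) ≤ (m:ℝ))]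
  set ε : ℝ := p / N with hε
  have hεpos : 0 < ε := by positivity
  have hN0 : (N:ℝ) ≠ 0 := ne_of_gt hNpos
  have hN10 : (N:ℝ) + 1 ≠ 0 := by positivity
  have hqpos : (0:ℝ) < ((N:ℝ) + 1) / N := by positivity
  have hq'pos : (0:ℝ) < (N:ℝ) + 1 := by positivity
  have h1 : ((N:ℝ) + 1) / (((N:ℝ) + 1) / N) + 1 = (N:ℝ) + 1 := by
    rw [div_div_eq_mul_div, mul_comm, mul_div_assoc, div_self hN10, mul_one]
  have h2 : (((N:ℝ) + 1) / N) / ((N:ℝ) + 1) + 1 = ((N:ℝ) + 1) / N := by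
    field_simp; ring
  have hpq : p * (((N:ℝ) + 1) / N) = p + ε := by
    rw [hε]; field_simp
  set b : ℝ≥0∞ := ENNReal.ofReal c with hb
  set r : ℝ≥0∞ := b ^ (N + 1) with hr
  -- pointwise Young bound
  have hpoint : ∀ g : G,
      (‖f g‖₊ : ℝ≥0∞) ^ p * b ^ sInf {n : ℕ | 1 ≤ n ∧ g ∈ A₀ ^ n}
        ≤ (‖f g‖₊ : ℝ≥0∞) ^ (p + ε) + r ^ sInf {n : ℕ | 1 ≤ n ∧ g ∈ A₀ ^ n} := by
    intro g
    set L : ℕ := sInf {n : ℕ | 1 ≤ n ∧ g ∈ A₀ ^ n} with hL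
    have := stmt11_young ((‖f g‖₊ : ℝ≥0∞) ^ p) (b ^ L) (((N:ℝ) + 1) / N) ((N:ℝ) + 1) hqpos hq'pos h1 h2
    refine le_trans this (le_of_eq ?_)
    congr 1
    · rw [← ENNReal.rpow_mul, hpq]
    · rw [show ((N:ℝ) + 1) = ((N + 1 : ℕ) : ℝ) by push_cast; ring,
        ENNReal.rpow_natCast, pow_right_comm]
  -- split the integral
  have hmeas1 : Measurable fun g => (‖f g‖₊ : ℝ≥0∞) ^ (p + ε) :=
    hmeas.nnnorm.coe_nnreal_ennreal.pow_const _
  have hsplit : ∫⁻ g, (‖f g‖₊ : ℝ≥0∞) ^ p * b ^ sInf {n : ℕ | 1 ≤ n ∧ g ∈ A₀ ^ n} ∂μ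
      ≤ (∫⁻ g, (‖f g‖₊ : ℝ≥0∞) ^ (p + ε) ∂μ)
        + ∫⁻ g, r ^ sInf {n : ℕ | 1 ≤ n ∧ g ∈ A₀ ^ n} ∂μ := by
    refine le_trans (lintegral_mono hpoint) (le_of_eq ?_)
    exact lintegral_add_left hmeas1 _
  -- bound the geometric part
  have hopen_pow : ∀ n : ℕ, MeasurableSet (A₀ ^ (n + 1)) := by
    intro n
    have : IsOpen (A₀ ^ (n + 1)) := by rw [pow_succ']; exact hopen.mul_right
    exact this.measurableSet
  have hgeom : ∫⁻ g, r ^ sInf {n : ℕ | 1 ≤ n ∧ g ∈ A₀ ^ n} ∂μ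
      ≤ ∑' n : ℕ, r ^ (n + 1) * μ (A₀ ^ (n + 1)) := by
    have hpt : ∀ g : G, r ^ sInf {n : ℕ | 1 ≤ n ∧ g ∈ A₀ ^ n}
        ≤ ∑' n : ℕ, (A₀ ^ (n + 1)).indicator (fun _ => r ^ (n + 1)) g := by
      intro g
      obtain ⟨n, hn1, hng⟩ := hgen g
      have hmem : sInf {n : ℕ | 1 ≤ n ∧ g ∈ A₀ ^ n} ∈ {n : ℕ | 1 ≤ n ∧ g ∈ A₀ ^ n} :=
        Nat.sInf_mem ⟨n, hn1, hng⟩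
      obtain ⟨h1', h2'⟩ := hmem
      obtain ⟨n₀, hn₀⟩ : ∃ n₀, sInf {n : ℕ | 1 ≤ n ∧ g ∈ A₀ ^ n} = n₀ + 1 :=
        ⟨sInf {n : ℕ | 1 ≤ n ∧ g ∈ A₀ ^ n} - 1, by omega⟩
      have : (A₀ ^ (n₀ + 1)).indicator (fun _ => r ^ (n₀ + 1)) g = r ^ (n₀ + 1) := by
        rw [Set.indicator_of_mem]
        rw [← hn₀]; exact h2'
      calc r ^ sInf {n : ℕ | 1 ≤ n ∧ g ∈ A₀ ^ n} = r ^ (n₀ + 1) := by rw [hn₀]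
        _ = (A₀ ^ (n₀ + 1)).indicator (fun _ => r ^ (n₀ + 1)) g := this.symm
        _ ≤ _ := ENNReal.le_tsum n₀
    calc ∫⁻ g, r ^ sInf {n : ℕ | 1 ≤ n ∧ g ∈ A₀ ^ n} ∂μ
        ≤ ∫⁻ g, ∑' n : ℕ, (A₀ ^ (n + 1)).indicator (fun _ => r ^ (n + 1)) g ∂μ :=
          lintegral_mono hpt
      _ = ∑' n : ℕ, ∫⁻ g, (A₀ ^ (n + 1)).indicator (fun _ => r ^ (n + 1)) g ∂μ :=
          lintegral_tsum fun n =>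
            ((measurable_const.indicator (hopen_pow n))).aemeasurable
      _ = ∑' n : ℕ, r ^ (n + 1) * μ (A₀ ^ (n + 1)) := by
          refine tsum_congr fun n => ?_
          rw [lintegral_indicator_const (hopen_pow n)]
  have hrm : r * m < 1 := by
    have : r = ENNReal.ofReal (c ^ (N + 1)) := by
      rw [hr, hb, ← ENNReal.ofReal_pow hc0.le]
    rw [this, show ((m : ℝ≥0∞)) = ENNReal.ofReal m by simp,
      ← ENNReal.ofReal_mul (by positivity)]
    exact ENNReal.ofReal_lt_one.2 hcN
  have hsum : ∑' n : ℕ, r ^ (n + 1) * μ (A₀ ^ (n + 1)) < ⊤ := by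
    have hbound : ∀ n : ℕ, r ^ (n + 1) * μ (A₀ ^ (n + 1)) ≤ (r * m) ^ n * (r * μ K) := by
      intro n
      calc r ^ (n + 1) * μ (A₀ ^ (n + 1)) ≤ r ^ (n + 1) * ((m : ℝ≥0∞) ^ n * μ K) := by
            gcongr; exact hA n
        _ = (r * m) ^ n * (r * μ K) := by ring
    calc ∑' n : ℕ, r ^ (n + 1) * μ (A₀ ^ (n + 1))
        ≤ ∑' n : ℕ, (r * m) ^ n * (r * μ K) := ENNReal.tsum_le_tsum hbound
      _ = (∑' n : ℕ, (r * m) ^ n) * (r * μ K) := ENNReal.tsum_mul_right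
      _ = (1 - r * m)⁻¹ * (r * μ K) := by rw [ENNReal.tsum_geometric]
      _ < ⊤ := by
          apply ENNReal.mul_lt_top
          · exact ENNReal.inv_lt_top.2 (tsub_pos_of_lt hrm)
          · exact ENNReal.mul_lt_top (by
              rw [hr, hb]
              exact ENNReal.pow_lt_top ENNReal.ofReal_lt_top) hcomp.measure_lt_top
  calc ∫⁻ g, (‖f g‖₊ : ℝ≥0∞) ^ p * ENNReal.ofReal (1 - δ) ^ sInf {n : ℕ | 1 ≤ n ∧ g ∈ A₀ ^ n} ∂μ
      ≤ (∫⁻ g, (‖f g‖₊ : ℝ≥0∞) ^ (p + ε) ∂μ)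
        + ∫⁻ g, r ^ sInf {n : ℕ | 1 ≤ n ∧ g ∈ A₀ ^ n} ∂μ := hsplit
    _ < ⊤ := ENNReal.add_lt_top.2 ⟨hf ε hεpos, lt_of_le_of_lt hgeom hsum⟩
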